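/- For every integer m ≥ 4 there exist vectors u_1, u_2 ∈ F_{2^m}² such that for all x_1, x_2, x_3, x_4 ∈ F_{2^m}, at least one of u_1, u_2 does not lie in the F_2-linear span of {(x_1, x_1³), (x_2, x_2³), (x_3, x_3³), (x_4, x_4³)} inside F_{2^m}². (Equivalently, the second generalized covering radius of the binary primitive double-error-correcting BCH code satisfies ρ_2(BCH(2,m)) ≥ 5.) -/

import Mathlib

open Finset

section Aux

variable {F : Type*} [Field F] [CharP F 2] [DecidableEq F]

omit [DecidableEq F] in
lemma charTwo_add_eq_zero {a b : F} (h : a + b = 0) : a = b := by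
  have hb : -a = b := neg_eq_iff_add_eq_zero.mpr h
  rw [← hb, CharTwo.neg_eq]

/-- A subset of a char-2 field with at most two elements and zero sum has zero cube-sum. -/
lemma cube_sum_eq_zero_of_card_le_two (T : Finset F) (hcard : T.card ≤ 2)
    (h : ∑ y ∈ T, y = 0) : ∑ y ∈ T, y ^ 3 = 0 := by
  interval_cases h' : T.card
  · rw [Finset.card_eq_zero] at h'
    simp [h']
  · obtain ⟨a, rfl⟩ := Finset.card_eq_one.mp h'
    simp only [Finset.sum_singleton] at h ⊢
    simp [h]
  · obtain ⟨a, b, hab, hT⟩ := Finset.card_eq_two.mp h'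
    rw [hT, Finset.sum_pair hab] at h
    exact absurd (charTwo_add_eq_zero h) hab

/-- In char 2, sum over the "symmetric difference" equals the sum of the two sums. -/
lemma sum_symmdiff_eq (T₁ T₂ : Finset F) (f : F → F) :
    ∑ y ∈ (T₁ ∪ T₂) \ (T₁ ∩ T₂), f y = (∑ y ∈ T₁, f y) + ∑ y ∈ T₂, f y := by
  have h1 : ∑ y ∈ (T₁ ∪ T₂) \ (T₁ ∩ T₂), f y + ∑ y ∈ T₁ ∩ T₂, f y = ∑ y ∈ T₁ ∪ T₂, f y :=
    Finset.sum_sdiff (Finset.inter_subset_union)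
  have h2 : ∑ y ∈ T₁ ∪ T₂, f y + ∑ y ∈ T₁ ∩ T₂, f y = (∑ y ∈ T₁, f y) + ∑ y ∈ T₂, f y :=
    Finset.sum_union_inter
  have h3 : ∀ a b c d : F, a + c = b → b + c = d → a = d := by
    intro a b c d hb hd
    rw [← hd, ← hb, add_assoc, CharTwo.add_self_eq_zero, add_zero]
  exact h3 _ _ _ _ h1 h2

/-- The key combinatorial fact: two subsets of a set of at most 4 field elements,
each with zero sum and nonzero cube-sum, have equal cube-sums. -/
lemma cube_sums_eq (s T₁ T₂ : Finset F) (hs : s.card ≤ 4)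
    (h₁ : T₁ ⊆ s) (h₂ : T₂ ⊆ s)
    (e₁ : ∑ y ∈ T₁, y = 0) (e₂ : ∑ y ∈ T₂, y = 0)
    (c₁ : ∑ y ∈ T₁, y ^ 3 ≠ 0) (c₂ : ∑ y ∈ T₂, y ^ 3 ≠ 0) :
    ∑ y ∈ T₁, y ^ 3 = ∑ y ∈ T₂, y ^ 3 := by
  have hc₁ : 3 ≤ T₁.card := by
    by_contra h
    exact c₁ (cube_sum_eq_zero_of_card_le_two T₁ (by omega) e₁)
  have hc₂ : 3 ≤ T₂.card := by
    by_contra h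
    exact c₂ (cube_sum_eq_zero_of_card_le_two T₂ (by omega) e₂)
  have hunion : (T₁ ∪ T₂).card ≤ 4 :=
    le_trans (Finset.card_le_card (Finset.union_subset h₁ h₂)) hs
  have hinter : 2 ≤ (T₁ ∩ T₂).card := by
    have := Finset.card_union_add_card_inter T₁ T₂
    omega
  have hDcard : ((T₁ ∪ T₂) \ (T₁ ∩ T₂)).card ≤ 2 := by
    have := Finset.card_sdiff_of_subset (Finset.inter_subset_union (s := T₁) (t := T₂))
    omega
  have hDsum : ∑ y ∈ (T₁ ∪ T₂) \ (T₁ ∩ T₂), y = 0 := by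
    rw [sum_symmdiff_eq T₁ T₂ (fun y => y), e₁, e₂, add_zero]
  have hDcube : ∑ y ∈ (T₁ ∪ T₂) \ (T₁ ∩ T₂), y ^ 3 = 0 :=
    cube_sum_eq_zero_of_card_le_two _ hDcard hDsum
  rw [sum_symmdiff_eq T₁ T₂ (fun y => y ^ 3)] at hDcube
  exact charTwo_add_eq_zero hDcube

end Aux

/-- Extract a subset-sum representation from span membership. -/
lemma exists_subset_of_mem_span {m : ℕ} [DecidableEq (GaloisField 2 m)]
    (s : Finset (GaloisField 2 m)) (u : GaloisField 2 m × GaloisField 2 m)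
    (hu : u ∈ Submodule.span (ZMod 2)
      ((fun x : GaloisField 2 m => (x, x ^ 3)) '' (↑s : Set (GaloisField 2 m)))) :
    ∃ T ⊆ s, (∑ y ∈ T, y = u.1 ∧ ∑ y ∈ T, y ^ 3 = u.2) := by
  set f : GaloisField 2 m → GaloisField 2 m × GaloisField 2 m := fun x => (x, x ^ 3) with hf
  have hinj : Function.Injective f := fun a b hab => congrArg Prod.fst hab
  rw [← Finset.coe_image (f := f)] at hu
  obtain ⟨g, -, hg⟩ := Submodule.mem_span_finset.mp hu
  rw [Finset.sum_image (fun a _ b _ h => hinj h)] at hg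
  refine ⟨s.filter (fun y => g (f y) = 1), Finset.filter_subset _ _, ?_, ?_⟩
  · have := congrArg Prod.fst hg
    rw [Prod.fst_sum] at this
    rw [← this, Finset.sum_filter]
    refine Finset.sum_congr rfl fun y _ => ?_
    have hgy : g (f y) = 0 ∨ g (f y) = 1 := (by decide : ∀ a : ZMod 2, a = 0 ∨ a = 1) _
    rcases hgy with h | h <;> simp only [hf] at h <;> simp [h, hf]
  · have := congrArg Prod.snd hg
    rw [Prod.snd_sum] at this
    rw [← this, Finset.sum_filter]
    refine Finset.sum_congr rfl fun y _ => ?_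
    have hgy : g (f y) = 0 ∨ g (f y) = 1 := (by decide : ∀ a : ZMod 2, a = 0 ∨ a = 1) _
    rcases hgy with h | h <;> simp only [hf] at h <;> simp [h, hf]

/-- For every `m ≥ 4` there exist `u₁, u₂ ∈ F_{2^m}²` such that for all
`x₁, x₂, x₃, x₄ ∈ F_{2^m}`, at least one of `u₁, u₂` is not in the `F_2`-span of
`{(x_j, x_j³) : 1 ≤ j ≤ 4}`. Equivalently, `ρ₂(BCH(2,m)) ≥ 5`. -/
theorem rho_two_BCH_two_ge_five (m : ℕ) (hm : 4 ≤ m) :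
    ∃ u₁ u₂ : GaloisField 2 m × GaloisField 2 m,
      ∀ x₁ x₂ x₃ x₄ : GaloisField 2 m,
        u₁ ∉ Submodule.span (ZMod 2)
            ((fun x : GaloisField 2 m => (x, x ^ 3)) '' {x₁, x₂, x₃, x₄}) ∨
        u₂ ∉ Submodule.span (ZMod 2)
            ((fun x : GaloisField 2 m => (x, x ^ 3)) '' {x₁, x₂, x₃, x₄}) := by
  classical
  haveI : Fintype (GaloisField 2 m) := Fintype.ofFinite _
  -- there is an element `c ∉ {0, 1}` since the field has `2^m ≥ 16` elements
  have hcard : Fintype.card (GaloisField 2 m) = 2 ^ m := by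
    rw [← Nat.card_eq_fintype_card]; exact GaloisField.card 2 m (by omega)
  obtain ⟨c, hc0, hc1⟩ : ∃ c : GaloisField 2 m, c ≠ 0 ∧ c ≠ 1 := by
    by_contra h
    push_neg at h
    have : (Finset.univ : Finset (GaloisField 2 m)) ⊆ {0, 1} := by
      intro a _
      rcases eq_or_ne a 0 with h0 | h0
      · simp [h0]
      · simp [h a h0]
    have := Finset.card_le_card this
    have h2 : ({0, 1} : Finset (GaloisField 2 m)).card ≤ 2 :=
      Finset.card_insert_le _ _ |>.trans (by simp)
    rw [Finset.card_univ, hcard] at this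
    have : 2 ^ m ≤ 2 := le_trans this h2
    have : 2 ^ 4 ≤ 2 ^ m := Nat.pow_le_pow_right (by norm_num) hm
    omega
  refine ⟨(0, 1), (0, c), fun x₁ x₂ x₃ x₄ => ?_⟩
  by_contra h
  push_neg at h
  obtain ⟨h₁, h₂⟩ := h
  set s : Finset (GaloisField 2 m) := {x₁, x₂, x₃, x₄} with hs
  have hset : ({x₁, x₂, x₃, x₄} : Set (GaloisField 2 m)) = ↑s := by
    simp [hs]
  rw [hset] at h₁ h₂
  obtain ⟨T₁, hT₁s, e₁, c₁⟩ := exists_subset_of_mem_span s _ h₁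
  obtain ⟨T₂, hT₂s, e₂, c₂⟩ := exists_subset_of_mem_span s _ h₂
  have hscard : s.card ≤ 4 := by
    refine le_trans (Finset.card_insert_le _ _) ?_
    refine Nat.succ_le_succ (le_trans (Finset.card_insert_le _ _) ?_)
    refine Nat.succ_le_succ (le_trans (Finset.card_insert_le _ _) ?_)
    simp
  have := cube_sums_eq (F := GaloisField 2 m) s T₁ T₂ hscard hT₁s hT₂s e₁ e₂
    (by rw [c₁]; exact one_ne_zero) (by rw [c₂]; exact hc0)
  rw [c₁, c₂] at this
  exact hc1 this.symm
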